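/- Fix α₀, β₀, ξ, L > 0, integers K ≥ 0 and M ≥ 1, losses x₁,…,x_K with x_k ≥ L for all k, and expert opinions θ₁,…,θ_M > 0. Set ν = α₀ − 1 − Mξ + K, ω = 1/β₀ + Σ_{k=1}^K log(x_k/L) and φ = ξ·Σ_{m=1}^M θ_m. Then there exists c > 0 such that for every γ > 0, [γ^{α₀−1} e^{−γ/β₀}/(β₀^{α₀}Γ(α₀))] · ∏_{k=1}^K (γ/L)(x_k/L)^{−(γ+1)} · ∏_{m=1}^M [θ_m^{ξ−1} e^{−θ_m ξ/γ}/((γ/ξ)^ξ Γ(ξ))] = c · γ^ν exp(−ωγ − φ/γ); that is, the posterior density of the Pareto tail index in the Pareto–Gamma–Gamma model is the generalized inverse Gaussian density GIG(ω,φ,ν). -/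

import Mathlib

open MeasureTheory ProbabilityTheory Filter

/-- Modified Bessel function of the third kind:
`K_ν(z) = (1/2) ∫₀^∞ u^(ν-1) exp(-z(u+1/u)/2) du`. -/
noncomputable def besselK (ν z : ℝ) : ℝ :=
  (1 / 2) * ∫ u in Set.Ioi (0 : ℝ), u ^ (ν - 1) * Real.exp (-(z * (u + 1 / u)) / 2)

/-- The ratio `R_ν(z) = K_{ν+1}(z) / K_ν(z)`. -/
noncomputable def besselR (ν z : ℝ) : ℝ := besselK (ν + 1) z / besselK ν z

/-- **Pareto–Gamma–Gamma posterior, Theorem 5.**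
The product of the Gamma(α₀,β₀) prior density, the Pareto(γ,L) likelihoods of the losses
and the Gamma(ξ, γ/ξ) likelihoods of the expert opinions is, up to a positive normalizing
constant, the GIG(ω,φ,ν) density `γ^ν exp(-ωγ - φ/γ)`. -/
theorem pareto_gamma_gamma_posterior_is_GIG
    (α₀ β₀ ξ L : ℝ) (hα₀ : 0 < α₀) (hβ₀ : 0 < β₀) (hξ : 0 < ξ) (hL : 0 < L)
    (K M : ℕ) (hM : 1 ≤ M) (x : Fin K → ℝ) (hx : ∀ k, L ≤ x k)
    (θ : Fin M → ℝ) (hθ : ∀ m, 0 < θ m)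
    (ν ω φ : ℝ)
    (hν : ν = α₀ - 1 - M * ξ + K)
    (hω : ω = 1 / β₀ + ∑ k, Real.log (x k / L))
    (hφ : φ = ξ * ∑ m, θ m) :
    ∃ c : ℝ, 0 < c ∧ ∀ γ : ℝ, 0 < γ →
      (γ ^ (α₀ - 1) * Real.exp (-γ / β₀) / (β₀ ^ α₀ * Real.Gamma α₀)) *
        (∏ k, γ / L * (x k / L) ^ (-(γ + 1))) *
        (∏ m, θ m ^ (ξ - 1) * Real.exp (-(θ m * ξ) / γ) / ((γ / ξ) ^ ξ * Real.Gamma ξ)) =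
      c * (γ ^ ν * Real.exp (-(ω * γ) - φ / γ)) := by
  have hxL : ∀ k, (0:ℝ) < x k / L := fun k =>
    lt_of_lt_of_le zero_lt_one ((one_le_div hL).mpr (hx k))
  set G := ∑ k, Real.log (x k / L) with hG
  set T := ∑ m, θ m with hT
  refine ⟨(β₀ ^ α₀ * Real.Gamma α₀)⁻¹ * (∏ k, (x k / L)⁻¹ / L) *
      (∏ m, θ m ^ (ξ - 1) * ξ ^ ξ / Real.Gamma ξ), ?_, ?_⟩
  · have h1 : (0:ℝ) < (β₀ ^ α₀ * Real.Gamma α₀)⁻¹ := by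
      have := Real.Gamma_pos_of_pos hα₀
      have := Real.rpow_pos_of_pos hβ₀ α₀
      positivity
    have h2 : (0:ℝ) < ∏ k, (x k / L)⁻¹ / L :=
      Finset.prod_pos fun k _ => by have := hxL k; positivity
    have h3 : (0:ℝ) < ∏ m, θ m ^ (ξ - 1) * ξ ^ ξ / Real.Gamma ξ :=
      Finset.prod_pos fun m _ => by
        have := Real.Gamma_pos_of_pos hξ
        have := Real.rpow_pos_of_pos (hθ m) (ξ - 1)
        have := Real.rpow_pos_of_pos hξ ξ
        positivity
    positivity
  · intro γ hγ
    have hγ0 : γ ≠ 0 := ne_of_gt hγ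
    have P1 : (∏ k, γ / L * (x k / L) ^ (-(γ + 1))) =
        γ ^ (K:ℕ) * ((∏ k, (x k / L)⁻¹ / L) * Real.exp (-(γ * G))) := by
      have step : ∀ k : Fin K, γ / L * (x k / L) ^ (-(γ + 1)) =
          γ * (((x k / L)⁻¹ / L) * Real.exp (-(γ * Real.log (x k / L)))) := by
        intro k
        have h1 : (x k / L) ^ (-(γ + 1)) = (x k / L) ^ (-γ) * (x k / L) ^ (-(1:ℝ)) := by
          rw [← Real.rpow_add (hxL k)]; ring_nf
        rw [h1, Real.rpow_neg_one, Real.rpow_def_of_pos (hxL k),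
          show Real.log (x k / L) * (-γ) = -(γ * Real.log (x k / L)) by ring]
        ring
      rw [Finset.prod_congr rfl fun k _ => step k, Finset.prod_mul_distrib,
        Finset.prod_const, Finset.card_univ, Fintype.card_fin,
        Finset.prod_mul_distrib, ← Real.exp_sum]
      congr 2
      rw [hG, Finset.mul_sum, ← Finset.sum_neg_distrib]
    have P2 : (∏ m, θ m ^ (ξ - 1) * Real.exp (-(θ m * ξ) / γ) / ((γ / ξ) ^ ξ * Real.Gamma ξ)) =
        (γ ^ (-(ξ * (M:ℝ)))) * ((∏ m, θ m ^ (ξ - 1) * ξ ^ ξ / Real.Gamma ξ) *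
          Real.exp (-(ξ * T) / γ)) := by
      have hγξ : (0:ℝ) < γ ^ ξ := Real.rpow_pos_of_pos hγ ξ
      have step : ∀ m : Fin M, θ m ^ (ξ - 1) * Real.exp (-(θ m * ξ) / γ) / ((γ / ξ) ^ ξ * Real.Gamma ξ) =
          (γ ^ ξ)⁻¹ * ((θ m ^ (ξ - 1) * ξ ^ ξ / Real.Gamma ξ) * Real.exp (-(θ m * ξ) / γ)) := by
        intro m
        rw [Real.div_rpow hγ.le hξ.le]
        field_simp
      rw [Finset.prod_congr rfl fun m _ => step m, Finset.prod_mul_distrib,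
        Finset.prod_const, Finset.card_univ, Fintype.card_fin,
        Finset.prod_mul_distrib, ← Real.exp_sum]
      congr 1
      · rw [inv_pow, ← Real.rpow_natCast (γ ^ ξ) M, ← Real.rpow_mul hγ.le,
          ← Real.rpow_neg hγ.le]
      · congr 1
        rw [hT, Finset.mul_sum, ← Finset.sum_neg_distrib, Finset.sum_div]
        congr 1
        exact Finset.sum_congr rfl fun m _ => by ring
    have e2 : Real.exp (-(ω * γ) - φ / γ) =
        Real.exp (-γ / β₀) * Real.exp (-(γ * G)) * Real.exp (-(ξ * T) / γ) := by
      rw [← Real.exp_add, ← Real.exp_add]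
      congr 1
      rw [hω, hφ]
      ring
    have e1 : γ ^ ν = γ ^ (α₀ - 1) * γ ^ (K:ℕ) * γ ^ (-(ξ * (M:ℝ))) := by
      rw [← Real.rpow_natCast γ K, ← Real.rpow_add hγ, ← Real.rpow_add hγ, hν]
      ring_nf
    rw [P1, P2, e1, e2]
    ring
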